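/- If w_1,...,w_m are probability distributions with pairwise disjoint supports and alpha, beta are probability vectors in R^m with positive entries, then J_P(sum_k alpha_k w_k, sum_k beta_k w_k) = J_P(alpha, beta). -/

import Mathlib

open Finset

open Classical in
/-- The probability Jaccard similarity of two nonnegative vectors. -/
noncomputable def JP {ι : Type*} [Fintype ι] (x y : ι → ℝ) : ℝ :=
  ∑ i ∈ Finset.univ.filter (fun i => 0 < x i ∧ 0 < y i),
    (∑ j, max (x j / x i) (y j / y i))⁻¹

/-- `J_P` of mixtures of distributions with pairwise disjoint supports equals `J_P` of the
mixture weights. -/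
theorem JP_disjoint_mixture {m : ℕ} {ι : Type*} [Fintype ι]
    (w : Fin m → ι → ℝ)
    (hw : ∀ k i, 0 ≤ w k i) (hws : ∀ k, ∑ i, w k i = 1)
    (hdisj : ∀ k l, k ≠ l → ∀ i, w k i = 0 ∨ w l i = 0)
    (α β : Fin m → ℝ) (hα : ∀ k, 0 < α k) (hβ : ∀ k, 0 < β k)
    (hαs : ∑ k, α k = 1) (hβs : ∑ k, β k = 1) :
    JP (fun i => ∑ k, α k * w k i) (fun i => ∑ k, β k * w k i) = JP α β := by
  classical
  set x : ι → ℝ := fun i => ∑ k, α k * w k i with hxdef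
  set y : ι → ℝ := fun i => ∑ k, β k * w k i with hydef
  set S : Fin m → ℝ := fun k => ∑ l, max (α l / α k) (β l / β k) with hSdef
  have key : ∀ i, (if 0 < x i ∧ 0 < y i then (∑ j, max (x j / x i) (y j / y i))⁻¹ else 0)
      = ∑ k, w k i * (S k)⁻¹ := by
    intro i
    by_cases hi : ∃ k, 0 < w k i
    · obtain ⟨k0, hk0⟩ := hi
      have huniq : ∀ l, l ≠ k0 → w l i = 0 := fun l hl =>
        (hdisj l k0 hl i).resolve_right hk0.ne'
      have hxi : x i = α k0 * w k0 i :=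
        Fintype.sum_eq_single k0 (fun l hl => by rw [huniq l hl, mul_zero])
      have hyi : y i = β k0 * w k0 i :=
        Fintype.sum_eq_single k0 (fun l hl => by rw [huniq l hl, mul_zero])
      have hxi0 : 0 < x i := hxi ▸ mul_pos (hα k0) hk0
      have hyi0 : 0 < y i := hyi ▸ mul_pos (hβ k0) hk0
      rw [if_pos ⟨hxi0, hyi0⟩]
      have hsum : ∑ j, max (x j / x i) (y j / y i) = (w k0 i)⁻¹ * S k0 := by
        have hpt : ∀ j, max (x j / x i) (y j / y i)
            = (w k0 i)⁻¹ * ∑ l, w l j * max (α l / α k0) (β l / β k0) := by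
          intro j
          by_cases hj : ∃ l, 0 < w l j
          · obtain ⟨l0, hl0⟩ := hj
            have huniqj : ∀ l, l ≠ l0 → w l j = 0 := fun l hl =>
              (hdisj l l0 hl j).resolve_right hl0.ne'
            have hxj : x j = α l0 * w l0 j :=
              Fintype.sum_eq_single l0 (fun l hl => by rw [huniqj l hl, mul_zero])
            have hyj : y j = β l0 * w l0 j :=
              Fintype.sum_eq_single l0 (fun l hl => by rw [huniqj l hl, mul_zero])
            have hsumj : ∑ l, w l j * max (α l / α k0) (β l / β k0)
                = w l0 j * max (α l0 / α k0) (β l0 / β k0) :=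
              Fintype.sum_eq_single l0 (fun l hl => by rw [huniqj l hl, zero_mul])
            rw [hsumj, hxj, hyj, hxi, hyi]
            have hc : (0:ℝ) ≤ (w k0 i)⁻¹ * w l0 j :=
              mul_nonneg (inv_nonneg.mpr hk0.le) (hw l0 j)
            rw [← mul_assoc, mul_max_of_nonneg _ _ hc]
            congr 1
            · field_simp
            · field_simp
          · push_neg at hj
            have hz : ∀ l, w l j = 0 := fun l => le_antisymm (hj l) (hw l j)
            have hxj : x j = 0 := by
              simp only [hxdef]
              exact Finset.sum_eq_zero fun l _ => by rw [hz l, mul_zero]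
            have hyj : y j = 0 := by
              simp only [hydef]
              exact Finset.sum_eq_zero fun l _ => by rw [hz l, mul_zero]
            rw [hxj, hyj, zero_div, zero_div, max_self]
            rw [Finset.sum_eq_zero fun l _ => by rw [hz l, zero_mul], mul_zero]
        rw [Finset.sum_congr rfl fun j _ => hpt j, ← Finset.mul_sum]
        congr 1
        rw [Finset.sum_comm]
        simp only [← Finset.sum_mul, hws, one_mul, hSdef]
      rw [hsum, mul_inv, inv_inv]
      exact (show (∑ k, w k i * (S k)⁻¹) = w k0 i * (S k0)⁻¹ from
        Fintype.sum_eq_single k0 fun l hl => by rw [huniq l hl, zero_mul]).symm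
    · push_neg at hi
      have hz : ∀ k, w k i = 0 := fun k => le_antisymm (hi k) (hw k i)
      have hxi : x i = 0 := Finset.sum_eq_zero fun l _ => by rw [hz l, mul_zero]
      rw [if_neg (by rw [hxi]; exact fun h => lt_irrefl 0 h.1)]
      exact (Finset.sum_eq_zero fun l _ => by rw [hz l, zero_mul]).symm
  have h1 : JP x y = ∑ k, (S k)⁻¹ := by
    rw [JP, Finset.sum_filter, Finset.sum_congr rfl fun i _ => key i, Finset.sum_comm]
    simp only [← Finset.sum_mul, hws, one_mul]
  have h2 : JP α β = ∑ k, (S k)⁻¹ := by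
    rw [JP]
    rw [Finset.filter_true_of_mem fun k _ => ⟨hα k, hβ k⟩]
  rw [h1, h2]
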